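/- Let (M,U) be a Lax pair such that M has ∂-support in the interval [α,β] (α,β ∈ ℤ, α ≤ β). Then: (i) for the gauge transformation G = M, the matrix S(G)·M·G⁻¹ equals S(M), and the pair (S(M), D(M)·M⁻¹ + M·U·M⁻¹) is a Lax pair whose first member has ∂-support in [α+1, β+1]; (ii) for the gauge transformation Ğ = S⁻¹(M⁻¹), the matrix S(Ğ)·M·Ğ⁻¹ equals S⁻¹(M), and the pair (S⁻¹(M), D(Ğ)·Ğ⁻¹ + Ğ·U·Ğ⁻¹) is a Lax pair whose first member has ∂-support in [α−1, β−1]; (iii) consequently, for every q ∈ ℤ there exists G_q ∈ GL(d,R) such that S(G_q)·M·G_q⁻¹ = S^q(M) and (S^q(M), D(G_q)·G_q⁻¹ + G_q·U·G_q⁻¹) is a Lax pair, whose first member has ∂-support in [α+q, β+q]. -/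

import Mathlib

section Helpers
set_option linter.unusedSectionVars false
set_option linter.unusedVariables false
variable {R : Type*} [CommRing R] {n : Type*} [Fintype n] [DecidableEq n]

lemma der_zero (D : R → R) (hDadd : ∀ x y, D (x + y) = D x + D y) : D 0 = 0 := by
  have h := hDadd 0 0
  rw [add_zero] at h
  exact (left_eq_add.mp h)

lemma der_one (D : R → R) (hDmul : ∀ x y, D (x * y) = x * D y + D x * y) : D 1 = 0 := by
  have h := hDmul 1 1
  rw [mul_one, one_mul, mul_one] at h
  exact left_eq_add.mp h

lemma map_der_mul (D : R → R) (hDadd : ∀ x y, D (x + y) = D x + D y)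
    (hDmul : ∀ x y, D (x * y) = x * D y + D x * y) (A B : Matrix n n R) :
    (A * B).map D = A * B.map D + A.map D * B := by
  ext i k
  have hsum : ∀ (s : Finset n) (g : n → R), D (∑ j ∈ s, g j) = ∑ j ∈ s, D (g j) := by
    intro s g
    exact map_sum (AddMonoidHom.mk' D hDadd) g s
  simp [Matrix.map_apply, Matrix.mul_apply, Matrix.add_apply, hsum, hDmul,
    Finset.sum_add_distrib]

lemma map_der_one (D : R → R) (hDadd : ∀ x y, D (x + y) = D x + D y)
    (hDmul : ∀ x y, D (x * y) = x * D y + D x * y) :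
    (1 : Matrix n n R).map D = 0 := by
  ext i k
  simp only [Matrix.map_apply, Matrix.one_apply, Matrix.zero_apply]
  split <;> simp [der_one D hDmul, der_zero D hDadd]

lemma map_der_inv (D : R → R) (hDadd : ∀ x y, D (x + y) = D x + D y)
    (hDmul : ∀ x y, D (x * y) = x * D y + D x * y) (M : Matrix n n R) (hM : IsUnit M.det) :
    (M⁻¹).map D = -(M⁻¹ * M.map D * M⁻¹) := by
  have h0 : (M * M⁻¹).map D = 0 := by
    rw [Matrix.mul_nonsing_inv M hM, map_der_one D hDadd hDmul]
  rw [map_der_mul D hDadd hDmul] at h0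
  have h1 : M * (M⁻¹.map D) = -(M.map D * M⁻¹) := eq_neg_of_add_eq_zero_left h0
  calc M⁻¹.map D = M⁻¹ * (M * M⁻¹.map D) := by
        rw [← Matrix.mul_assoc, Matrix.nonsing_inv_mul M hM, Matrix.one_mul]
    _ = -(M⁻¹ * M.map D * M⁻¹) := by rw [h1, Matrix.mul_neg, Matrix.mul_assoc]

lemma mapS_mul (S : R ≃+* R) (A B : Matrix n n R) :
    (A * B).map ⇑S = A.map ⇑S * B.map ⇑S :=
  Matrix.map_mul (f := (S : R →+* R))

lemma mapS_add (S : R ≃+* R) (A B : Matrix n n R) :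
    (A + B).map ⇑S = A.map ⇑S + B.map ⇑S :=
  Matrix.map_add _ (fun x y => map_add S x y) _ _

lemma mapS_one (S : R ≃+* R) : (1 : Matrix n n R).map ⇑S = 1 :=
  Matrix.map_one _ (map_zero S) (map_one S)

lemma mapS_det (S : R ≃+* R) (M : Matrix n n R) : (M.map ⇑S).det = S M.det := by
  rw [RingEquiv.map_det, RingEquiv.mapMatrix_apply]

lemma gauge_lax (S : R ≃+* R) (D : R → R)
    (hDadd : ∀ x y, D (x + y) = D x + D y)
    (hDmul : ∀ x y, D (x * y) = x * D y + D x * y)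
    (hDS : ∀ x, D (S x) = S (D x))
    (M U G : Matrix n n R) (hM : IsUnit M.det) (hG : IsUnit G.det)
    (hLax : M.map D = U.map ⇑S * M - M * U) :
    ((G.map ⇑S) * M * G⁻¹).map D =
      ((G.map D * G⁻¹ + G * U * G⁻¹).map ⇑S) * ((G.map ⇑S) * M * G⁻¹) -
        ((G.map ⇑S) * M * G⁻¹) * (G.map D * G⁻¹ + G * U * G⁻¹) := by
  have hDSmat : ∀ A : Matrix n n R, (A.map ⇑S).map D = (A.map D).map ⇑S := by
    intro A; ext i k; simp [Matrix.map_apply, hDS]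
  have e2 : ∀ X : Matrix n n R, G⁻¹ * (G * X) = X := by
    intro X; rw [← Matrix.mul_assoc, Matrix.nonsing_inv_mul G hG, Matrix.one_mul]
  have e3 : ∀ X : Matrix n n R, G * (G⁻¹ * X) = X := by
    intro X; rw [← Matrix.mul_assoc, Matrix.mul_nonsing_inv G hG, Matrix.one_mul]
  have e4 : ∀ X : Matrix n n R, G⁻¹.map ⇑S * (G.map ⇑S * X) = X := by
    intro X; rw [← Matrix.mul_assoc, ← mapS_mul, Matrix.nonsing_inv_mul G hG, mapS_one,
      Matrix.one_mul]
  have e4' : G⁻¹.map ⇑S * G.map ⇑S = 1 := by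
    rw [← mapS_mul, Matrix.nonsing_inv_mul G hG, mapS_one]
  have e2' : G⁻¹ * G = 1 := Matrix.nonsing_inv_mul G hG
  have e3' : G * G⁻¹ = 1 := Matrix.mul_nonsing_inv G hG
  rw [map_der_mul D hDadd hDmul, map_der_mul D hDadd hDmul,
    map_der_inv D hDadd hDmul G hG, hDSmat, hLax, mapS_add, mapS_mul, mapS_mul, mapS_mul]
  simp only [mul_add, add_mul, mul_sub, sub_mul, mul_neg, neg_mul, mul_assoc, e2, e3, e4,
    e2', e3', e4', mul_one, one_mul]
  abel

end Helpers


/-- Fix positive integers `d`, `N`. Let `R` be a commutative ring, `S` a ring automorphism,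
`P j ℓ` (for `j ∈ Fin N`, `ℓ ∈ ℤ`) derivations with `S ∘ P j ℓ = P j (ℓ+1) ∘ S`, and
`D` a derivation with `D ∘ S = S ∘ D`; all act entrywise on `d×d` matrices.  A matrix `Q`
has ∂-support in `A ⊆ ℤ` if `P j ℓ Q = 0` for all `j` and all `ℓ ∉ A`.  A Lax pair is a
pair `(M, U)` with `M` invertible and `D(M) = S(U)·M − M·U`.  Claim: if `(M,U)` is a Lax
pair with `M` of ∂-support in `[α,β]`, then (i) the gauge transformation `G = M` yields the
Lax pair `(S(M), D(M)·M⁻¹ + M·U·M⁻¹)` with support shifted to `[α+1,β+1]`; (ii) the gauge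
transformation `Ğ = S⁻¹(M⁻¹)` yields the Lax pair `(S⁻¹(M), D(Ğ)·Ğ⁻¹ + Ğ·U·Ğ⁻¹)` with
support in `[α−1,β−1]`; (iii) for each `q : ℤ` there is an invertible `G_q` with
`S(G_q)·M·G_q⁻¹ = S^q(M)` forming a Lax pair with support in `[α+q, β+q]`. -/
theorem stmt_2 {d N : ℕ} (hd : 0 < d) (hN : 0 < N) {R : Type*} [CommRing R]
    (S : R ≃+* R)
    (P : Fin N → ℤ → R → R)
    (hPadd : ∀ j ℓ x y, P j ℓ (x + y) = P j ℓ x + P j ℓ y)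
    (hPmul : ∀ j ℓ x y, P j ℓ (x * y) = x * P j ℓ y + P j ℓ x * y)
    (hPS : ∀ j ℓ x, S (P j ℓ x) = P j (ℓ + 1) (S x))
    (D : R → R)
    (hDadd : ∀ x y, D (x + y) = D x + D y)
    (hDmul : ∀ x y, D (x * y) = x * D y + D x * y)
    (hDS : ∀ x, D (S x) = S (D x))
    (α β : ℤ) (hαβ : α ≤ β)
    (M U : Matrix (Fin d) (Fin d) R) (hM : IsUnit M.det)
    (hLax : M.map D = U.map ⇑S * M - M * U)
    (hsupp : ∀ (j : Fin N) (ℓ : ℤ), ℓ ∉ Set.Icc α β → M.map (P j ℓ) = 0) :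
    -- (i) gauge transformation G = M
    ((M.map ⇑S) * M * M⁻¹ = M.map ⇑S ∧
      IsUnit (M.map ⇑S).det ∧
      (M.map ⇑S).map D =
        ((M.map D * M⁻¹ + M * U * M⁻¹).map ⇑S) * (M.map ⇑S) -
          (M.map ⇑S) * (M.map D * M⁻¹ + M * U * M⁻¹) ∧
      ∀ (j : Fin N) (ℓ : ℤ), ℓ ∉ Set.Icc (α + 1) (β + 1) → (M.map ⇑S).map (P j ℓ) = 0) ∧
    -- (ii) gauge transformation Ğ = S⁻¹(M⁻¹)
    (((M⁻¹.map ⇑S.symm).map ⇑S) * M * (M⁻¹.map ⇑S.symm)⁻¹ = M.map ⇑S.symm ∧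
      IsUnit (M.map ⇑S.symm).det ∧
      (M.map ⇑S.symm).map D =
        (((M⁻¹.map ⇑S.symm).map D * (M⁻¹.map ⇑S.symm)⁻¹ +
            (M⁻¹.map ⇑S.symm) * U * (M⁻¹.map ⇑S.symm)⁻¹).map ⇑S) * (M.map ⇑S.symm) -
          (M.map ⇑S.symm) * ((M⁻¹.map ⇑S.symm).map D * (M⁻¹.map ⇑S.symm)⁻¹ +
            (M⁻¹.map ⇑S.symm) * U * (M⁻¹.map ⇑S.symm)⁻¹) ∧
      ∀ (j : Fin N) (ℓ : ℤ), ℓ ∉ Set.Icc (α - 1) (β - 1) → (M.map ⇑S.symm).map (P j ℓ) = 0) ∧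
    -- (iii) arbitrary shifts
    (∀ q : ℤ, ∃ G : Matrix (Fin d) (Fin d) R, IsUnit G.det ∧
      (G.map ⇑S) * M * G⁻¹ = M.map ⇑(S ^ q) ∧
      (M.map ⇑(S ^ q)).map D =
        ((G.map D * G⁻¹ + G * U * G⁻¹).map ⇑S) * (M.map ⇑(S ^ q)) -
          (M.map ⇑(S ^ q)) * (G.map D * G⁻¹ + G * U * G⁻¹) ∧
      IsUnit (M.map ⇑(S ^ q)).det ∧
      ∀ (j : Fin N) (ℓ : ℤ), ℓ ∉ Set.Icc (α + q) (β + q) → (M.map ⇑(S ^ q)).map (P j ℓ) = 0) := by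
  classical
  -- basic shifted-derivation facts
  have hPS' : ∀ (j : Fin N) (ℓ : ℤ) (x : R), P j ℓ (S x) = S (P j (ℓ - 1) x) := by
    intro j ℓ x
    have h := hPS j (ℓ - 1) x
    rw [sub_add_cancel] at h
    exact h.symm
  have hPSsymm : ∀ (j : Fin N) (ℓ : ℤ) (x : R), P j ℓ (S.symm x) = S.symm (P j (ℓ + 1) x) := by
    intro j ℓ x
    have h := hPS j ℓ (S.symm x)
    rw [S.apply_symm_apply] at h
    have h2 := congrArg S.symm h
    rwa [S.symm_apply_apply] at h2
  -- power coercion facts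
  have hpow_succ : ∀ (q : ℤ) (x : R), (S ^ (q + 1)) x = S ((S ^ q) x) := by
    intro q x
    have h : S ^ (q + 1) = S * S ^ q := by rw [add_comm, zpow_one_add]
    rw [h]; rfl
  have hpow_pred : ∀ (q : ℤ) (x : R), (S ^ (q - 1)) x = S.symm ((S ^ q) x) := by
    intro q x
    have h : S ^ (q - 1) = S⁻¹ * S ^ q := by
      rw [sub_eq_add_neg, add_comm, zpow_add, zpow_neg_one]
    rw [h]; rfl
  have hpow_zero : ⇑(S ^ (0 : ℤ)) = (id : R → R) := by rw [zpow_zero]; rfl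
  have hcomp : (⇑S ∘ ⇑S.symm : R → R) = id := funext fun x => S.apply_symm_apply x
  -- det facts
  have hdetq : ∀ q : ℤ, IsUnit (M.map ⇑(S ^ q)).det := by
    intro q
    rw [mapS_det]
    exact hM.map (S ^ q)
  have hMsdet : IsUnit (M.map ⇑S).det := by
    rw [mapS_det]; exact hM.map S
  have hMssdet : IsUnit (M.map ⇑S.symm).det := by
    rw [mapS_det]; exact hM.map S.symm
  -- derivation shift under S^q
  have hPSq : ∀ (q : ℤ) (j : Fin N) (ℓ : ℤ) (x : R),
      (S ^ q) (P j ℓ x) = P j (ℓ + q) ((S ^ q) x) := by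
    intro q
    induction q using Int.induction_on with
    | zero =>
      intro j ℓ x
      have h0 : ∀ y : R, (S ^ (0 : ℤ)) y = y := fun y => congrFun hpow_zero y
      rw [h0, h0, add_zero]
    | succ i ih =>
      intro j ℓ x
      rw [hpow_succ, hpow_succ, ih, hPS]
      have h : ℓ + ↑i + 1 = ℓ + (↑i + 1) := by ring
      rw [h]
    | pred i ih =>
      intro j ℓ x
      rw [hpow_pred, hpow_pred, ih]
      conv_rhs => rw [hPSsymm]
      have h : ℓ + (-↑i - 1) + 1 = ℓ + -↑i := by ring
      rw [h]
  -- support under S^q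
  have hsuppq : ∀ (q : ℤ) (j : Fin N) (ℓ : ℤ), ℓ ∉ Set.Icc (α + q) (β + q) →
      (M.map ⇑(S ^ q)).map (P j ℓ) = 0 := by
    intro q j ℓ hℓ
    have h1 : (M.map ⇑(S ^ q)).map (P j ℓ) = (M.map (P j (ℓ - q))).map ⇑(S ^ q) := by
      ext i k
      simp only [Matrix.map_apply]
      have h := hPSq q j (ℓ - q) (M i k)
      rw [sub_add_cancel] at h
      exact h.symm
    rw [h1, hsupp j (ℓ - q) (by simp only [Set.mem_Icc] at hℓ ⊢; omega)]
    exact Matrix.map_zero _ (map_zero _)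
  -- (i)
  have hMsM : (M.map ⇑S) * M * M⁻¹ = M.map ⇑S := by
    rw [Matrix.mul_assoc, Matrix.mul_nonsing_inv M hM, Matrix.mul_one]
  have hlax1 := gauge_lax S D hDadd hDmul hDS M U M hM hM hLax
  rw [hMsM] at hlax1
  have hsupp1 : ∀ (j : Fin N) (ℓ : ℤ), ℓ ∉ Set.Icc (α + 1) (β + 1) →
      (M.map ⇑S).map (P j ℓ) = 0 := by
    intro j ℓ hℓ
    have h1 : (M.map ⇑S).map (P j ℓ) = (M.map (P j (ℓ - 1))).map ⇑S := by
      ext i k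
      simp only [Matrix.map_apply]
      exact hPS' j ℓ (M i k)
    rw [h1, hsupp j (ℓ - 1) (by simp only [Set.mem_Icc] at hℓ ⊢; omega)]
    exact Matrix.map_zero _ (map_zero _)
  -- (ii)
  have hGsdown : (M⁻¹.map ⇑S.symm).map ⇑S = M⁻¹ := by
    rw [Matrix.map_map, hcomp, Matrix.map_id]
  have hGinvdown : (M⁻¹.map ⇑S.symm)⁻¹ = M.map ⇑S.symm := by
    apply Matrix.inv_eq_right_inv
    rw [← mapS_mul S.symm, Matrix.nonsing_inv_mul M hM, mapS_one S.symm]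
  have hGdown_det : IsUnit (M⁻¹.map ⇑S.symm).det := by
    rw [mapS_det]
    exact (Matrix.isUnit_nonsing_inv_det M hM).map S.symm
  have hMss : ((M⁻¹.map ⇑S.symm).map ⇑S) * M * (M⁻¹.map ⇑S.symm)⁻¹ = M.map ⇑S.symm := by
    rw [hGsdown, hGinvdown, Matrix.nonsing_inv_mul M hM, Matrix.one_mul]
  have hlax2 := gauge_lax S D hDadd hDmul hDS M U (M⁻¹.map ⇑S.symm) hM hGdown_det hLax
  rw [hMss] at hlax2
  have hsupp2 : ∀ (j : Fin N) (ℓ : ℤ), ℓ ∉ Set.Icc (α - 1) (β - 1) →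
      (M.map ⇑S.symm).map (P j ℓ) = 0 := by
    intro j ℓ hℓ
    have h1 : (M.map ⇑S.symm).map (P j ℓ) = (M.map (P j (ℓ + 1))).map ⇑S.symm := by
      ext i k
      simp only [Matrix.map_apply]
      exact hPSsymm j ℓ (M i k)
    rw [h1, hsupp j (ℓ + 1) (by simp only [Set.mem_Icc] at hℓ ⊢; omega)]
    exact Matrix.map_zero _ (map_zero _)
  -- (iii) existence of gauge matrices
  have hGex : ∀ q : ℤ, ∃ G : Matrix (Fin d) (Fin d) R, IsUnit G.det ∧
      (G.map ⇑S) * M * G⁻¹ = M.map ⇑(S ^ q) := by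
    intro q
    induction q using Int.induction_on with
    | zero =>
      refine ⟨1, by simp, ?_⟩
      rw [mapS_one, inv_one, Matrix.one_mul, Matrix.mul_one, hpow_zero, Matrix.map_id]
    | succ i ih =>
      obtain ⟨G, hGdet, hGeq⟩ := ih
      have hMqdet := hdetq (i : ℤ)
      refine ⟨M.map ⇑(S ^ (i : ℤ)) * G, ?_, ?_⟩
      · rw [Matrix.det_mul]; exact hMqdet.mul hGdet
      · rw [mapS_mul, Matrix.mul_inv_rev]
        have hre : (M.map ⇑(S ^ (i : ℤ))).map ⇑S * (G.map ⇑S) * M *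
              (G⁻¹ * (M.map ⇑(S ^ (i : ℤ)))⁻¹) =
            (M.map ⇑(S ^ (i : ℤ))).map ⇑S *
              ((G.map ⇑S) * M * G⁻¹ * (M.map ⇑(S ^ (i : ℤ)))⁻¹) := by
          noncomm_ring
        rw [hre, hGeq, Matrix.mul_nonsing_inv _ hMqdet, Matrix.mul_one, Matrix.map_map]
        have hf : (⇑S ∘ ⇑(S ^ (i : ℤ)) : R → R) = ⇑(S ^ ((i : ℤ) + 1)) :=
          funext fun x => (hpow_succ (i : ℤ) x).symm
        rw [hf]
    | pred i ih =>
      obtain ⟨G, hGdet, hGeq⟩ := ih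
      have hMqdet := hdetq (-(i : ℤ))
      have hA : ((M.map ⇑(S ^ (-(i : ℤ))))⁻¹.map ⇑S.symm).map ⇑S = (M.map ⇑(S ^ (-(i : ℤ))))⁻¹ := by
        rw [Matrix.map_map, hcomp, Matrix.map_id]
      have hB : ((M.map ⇑(S ^ (-(i : ℤ))))⁻¹.map ⇑S.symm)⁻¹ =
          (M.map ⇑(S ^ (-(i : ℤ)))).map ⇑S.symm := by
        apply Matrix.inv_eq_right_inv
        rw [← mapS_mul S.symm, Matrix.nonsing_inv_mul _ hMqdet, mapS_one S.symm]
      refine ⟨(M.map ⇑(S ^ (-(i : ℤ))))⁻¹.map ⇑S.symm * G, ?_, ?_⟩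
      · rw [Matrix.det_mul]
        refine IsUnit.mul ?_ hGdet
        rw [mapS_det]
        exact (Matrix.isUnit_nonsing_inv_det _ hMqdet).map S.symm
      · rw [mapS_mul, Matrix.mul_inv_rev, hA, hB]
        have hre : (M.map ⇑(S ^ (-(i : ℤ))))⁻¹ * (G.map ⇑S) * M *
              (G⁻¹ * ((M.map ⇑(S ^ (-(i : ℤ)))).map ⇑S.symm)) =
            (M.map ⇑(S ^ (-(i : ℤ))))⁻¹ *
              ((G.map ⇑S) * M * G⁻¹ * ((M.map ⇑(S ^ (-(i : ℤ)))).map ⇑S.symm)) := by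
          noncomm_ring
        rw [hre, hGeq, ← Matrix.mul_assoc, Matrix.nonsing_inv_mul _ hMqdet, Matrix.one_mul,
          Matrix.map_map]
        have hf : (⇑S.symm ∘ ⇑(S ^ (-(i : ℤ))) : R → R) = ⇑(S ^ (-(i : ℤ) - 1)) :=
          funext fun x => (hpow_pred (-(i : ℤ)) x).symm
        rw [hf]
  refine ⟨⟨hMsM, hMsdet, hlax1, hsupp1⟩, ⟨hMss, hMssdet, hlax2, hsupp2⟩, ?_⟩
  intro q
  obtain ⟨G, hGdet, hGeq⟩ := hGex q
  have hlax3 := gauge_lax S D hDadd hDmul hDS M U G hM hGdet hLax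
  rw [hGeq] at hlax3
  exact ⟨G, hGdet, hGeq, hlax3, hdetq q, hsuppq q⟩
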